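/- If w : (0,∞) → ℝ is a positive C² solution of w'' + ((n-1)/r + r/2) w' + w/(p-1) + w^p = 0 with n > 2 and p > 1, then w is nonincreasing, i.e. w'(r) ≤ 0 for all r > 0. -/

import Mathlib

open Set Filter

theorem stmt0 (n : ℕ) (hn : 2 < n) (p : ℝ) (hp : 1 < p) (w : ℝ → ℝ)
    (hpos : ∀ r > 0, 0 < w r)
    (hC2 : ContDiffOn ℝ 2 w (Ioi 0))
    (heq : ∀ r > 0, deriv (deriv w) r + (((n : ℝ) - 1) / r + r / 2) * deriv w r
      + w r / (p - 1) + w r ^ p = 0) :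
    ∀ r > 0, deriv w r ≤ 0 := by
  intro r₀ hr₀
  by_contra hcon
  push_neg at hcon
  have hn2 : (2:ℝ) < (n:ℝ) := by exact_mod_cast hn
  have hn2' : (0:ℝ) < (n:ℝ) - 2 := by linarith
  -- basic differentiability facts
  have hw1 : ContDiffOn ℝ 1 (deriv w) (Ioi 0) := by
    exact hC2.deriv_of_isOpen (m := 1) isOpen_Ioi (by norm_num)
  have hdw : ∀ r > (0:ℝ), HasDerivAt w (deriv w r) r := fun r hr =>
    (((hC2.differentiableOn (by norm_num)).differentiableAt
      (isOpen_Ioi.mem_nhds hr)).hasDerivAt)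
  have hddw : ∀ r > (0:ℝ), HasDerivAt (deriv w) (deriv (deriv w) r) r := fun r hr =>
    (((hw1.differentiableOn (by norm_num)).differentiableAt
      (isOpen_Ioi.mem_nhds hr)).hasDerivAt)
  -- the weight A and the function g
  set A : ℝ → ℝ := fun r => r ^ (n-1) * Real.exp (r^2/4) with hA_def
  have hApos : ∀ r > (0:ℝ), 0 < A r := fun r hr =>
    mul_pos (pow_pos hr _) (Real.exp_pos _)
  have hA : ∀ r > (0:ℝ), HasDerivAt A (A r * (((n:ℝ)-1)/r + r/2)) r := by
    intro r hr
    have h1 : HasDerivAt (fun r : ℝ => r ^ (n-1)) (((n:ℝ)-1) * r ^ (n-2)) r := by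
      have h := hasDerivAt_pow (n-1) r
      have e1 : ((n-1:ℕ):ℝ) = (n:ℝ)-1 := by rw [Nat.cast_sub (by omega)]; norm_num
      have e2 : n-1-1 = n-2 := by omega
      rw [e1, e2] at h; exact h
    have h2 : HasDerivAt (fun r : ℝ => Real.exp (r^2/4))
        (Real.exp (r^2/4) * (r/2)) r := by
      have hq : HasDerivAt (fun r : ℝ => r^2/4) (r/2) r := by
        have := (hasDerivAt_pow 2 r).div_const 4
        refine this.congr_deriv ?_; push_cast; ring
      exact (hq.exp).congr_deriv rfl
    have := h1.mul h2
    refine this.congr_deriv ?_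
    have hrne : r ≠ 0 := ne_of_gt hr
    have hpow : r ^ (n-1) = r ^ (n-2) * r := by
      rw [← pow_succ]; congr 1; omega
    simp only [hA_def]
    field_simp
    rw [hpow]; ring
  set g : ℝ → ℝ := fun r => A r * deriv w r with hg_def
  have hg : ∀ r > (0:ℝ), HasDerivAt g
      (A r * (deriv (deriv w) r + (((n:ℝ)-1)/r + r/2) * deriv w r)) r := by
    intro r hr
    have := (hA r hr).mul (hddw r hr)
    refine this.congr_deriv ?_
    ring
  have hcontg : ContinuousOn g (Ioi 0) := by
    apply ContinuousOn.mul _ hw1.continuousOn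
    exact ((continuous_pow _).mul (Real.continuous_exp.comp
      (by continuity))).continuousOn
  have hganti : StrictAntiOn g (Ioi 0) := by
    apply strictAntiOn_of_deriv_neg (convex_Ioi 0) hcontg
    intro x hx
    rw [interior_Ioi] at hx
    rw [(hg x hx).deriv]
    have hxpos : (0:ℝ) < x := hx
    have heqx := heq x hxpos
    have hsum : deriv (deriv w) x + (((n:ℝ)-1)/x + x/2) * deriv w x
        = -(w x / (p-1) + w x ^ p) := by linarith
    rw [hsum]
    have hwpos := hpos x hxpos
    have h1 : 0 < w x / (p-1) + w x ^ p := by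
      have := Real.rpow_pos_of_pos hwpos p
      have : 0 < w x ^ p := this
      have h2 : 0 < w x / (p-1) := div_pos hwpos (by linarith)
      linarith
    have := mul_pos (hApos x hxpos) h1
    linarith [mul_pos (hApos x hxpos) h1]
  -- the constants
  set c : ℝ := g r₀ with hc_def
  have hcpos : 0 < c := mul_pos (hApos r₀ hr₀) hcon
  set c' : ℝ := c * Real.exp (-(r₀^2/4)) with hc'_def
  have hc'pos : 0 < c' := mul_pos hcpos (Real.exp_pos _)
  -- rpow / npow conversion
  have hrpow_inv : ∀ r > (0:ℝ), r ^ ((1:ℝ) - n) = (r ^ (n-1 : ℕ))⁻¹ := by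
    intro r hr
    have h1 : ((1:ℝ) - n) = -((n-1 : ℕ) : ℝ) := by
      rw [Nat.cast_sub (by omega)]; push_cast; ring
    rw [h1, Real.rpow_neg hr.le, Real.rpow_natCast]
  -- key lower bound for w' on (0, r₀)
  have key : ∀ r ∈ Ioo (0:ℝ) r₀, c' * r ^ ((1:ℝ) - n) < deriv w r := by
    intro r hr
    obtain ⟨hr0, hrr₀⟩ := hr
    have hgr : c < g r := hganti (mem_Ioi.mpr hr0) (mem_Ioi.mpr hr₀) hrr₀
    have hAr := hApos r hr0
    have hexp_le : Real.exp (r^2/4) ≤ Real.exp (r₀^2/4) := by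
      apply Real.exp_le_exp.mpr
      have : r^2 ≤ r₀^2 := by nlinarith
      linarith
    have hmul : (c' * r ^ ((1:ℝ) - n)) * A r < deriv w r * A r := by
      have hL : (c' * r ^ ((1:ℝ) - n)) * A r
          = c * (Real.exp (-(r₀^2/4)) * Real.exp (r^2/4)) := by
        rw [hrpow_inv r hr0]
        simp only [hA_def]
        field_simp
        ring_nf; rw [hc'_def]; ring_nf
      have hR : deriv w r * A r = g r := by simp only [hg_def]; ring
      rw [hL, hR]
      calc c * (Real.exp (-(r₀^2/4)) * Real.exp (r^2/4))
          ≤ c * 1 := by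
            apply mul_le_mul_of_nonneg_left _ hcpos.le
            rw [← Real.exp_add]
            have : -(r₀^2/4) + r^2/4 ≤ 0 := by nlinarith
            calc Real.exp (-(r₀^2/4) + r^2/4) ≤ Real.exp 0 :=
                  Real.exp_le_exp.mpr this
              _ = 1 := Real.exp_zero
        _ = c := mul_one c
        _ < g r := hgr
    exact lt_of_mul_lt_mul_right hmul hAr.le
  -- the comparison function φ
  set φ : ℝ → ℝ := fun r => w r + (c' / ((n:ℝ)-2)) * r ^ ((2:ℝ) - n) with hφ_def
  have hne2n : ((2:ℝ) - n) ≠ 0 := by linarith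
  have hφderiv : ∀ r ∈ Ioo (0:ℝ) r₀,
      HasDerivAt φ (deriv w r - c' * r ^ ((1:ℝ) - n)) r := by
    intro r hr
    have hr0 := hr.1
    have h1 : HasDerivAt (fun x : ℝ => x ^ ((2:ℝ) - n))
        (((2:ℝ) - n) * r ^ ((2:ℝ) - n - 1)) r :=
      Real.hasDerivAt_rpow_const (Or.inl hr0.ne')
    have h2 := (hdw r hr0).add (HasDerivAt.const_mul (c' / ((n:ℝ)-2)) h1)
    refine h2.congr_deriv ?_
    have hex : (2:ℝ) - n - 1 = (1:ℝ) - n := by ring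
    rw [hex]
    field_simp
    ring
  have hφmono : StrictMonoOn φ (Ioc 0 r₀) := by
    apply strictMonoOn_of_deriv_pos (convex_Ioc 0 r₀)
    · apply ContinuousOn.add
      · exact (hC2.continuousOn).mono (fun x hx => hx.1)
      · intro x hx
        exact continuousWithinAt_const.mul
          ((Real.continuousAt_rpow_const x _ (Or.inl hx.1.ne')).continuousWithinAt)
    · intro x hx
      rw [interior_Ioc] at hx
      rw [(hφderiv x hx).deriv]
      have := key x hx
      linarith
  -- derive the bound on r^(2-n)
  set M : ℝ := φ r₀ * ((n:ℝ)-2) / c' with hM_def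
  have hbound : ∀ r ∈ Ioo (0:ℝ) r₀, r ^ ((2:ℝ) - n) < M := by
    intro r hr
    have h1 : φ r < φ r₀ :=
      hφmono (Ioc_subset_Ioc_right hr.2.le ⟨hr.1, le_refl r⟩)
        (right_mem_Ioc.mpr hr₀) hr.2
    have hwr := hpos r hr.1
    have h2 : (c' / ((n:ℝ)-2)) * r ^ ((2:ℝ) - n) < φ r₀ := by
      simp only [hφ_def] at h1 ⊢; linarith
    rw [hM_def]
    rw [lt_div_iff₀ hc'pos]
    calc r ^ ((2:ℝ) - n) * c'
        = (c' / ((n:ℝ)-2)) * r ^ ((2:ℝ) - n) * ((n:ℝ)-2) := by field_simp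
      _ < φ r₀ * ((n:ℝ)-2) := by
          exact mul_lt_mul_of_pos_right h2 hn2'
  -- choose a small r to contradict the bound
  set B : ℝ := max M 1 with hB_def
  have hBpos : 0 < B := lt_of_lt_of_le one_pos (le_max_right _ _)
  set s : ℝ := B ^ (((2:ℝ) - n)⁻¹) with hs_def
  have hspos : 0 < s := Real.rpow_pos_of_pos hBpos _
  set r : ℝ := min (r₀/2) s with hr_def
  have hrpos : 0 < r := lt_min (by linarith) hspos
  have hrmem : r ∈ Ioo (0:ℝ) r₀ := ⟨hrpos, lt_of_le_of_lt (min_le_left _ _) (by linarith)⟩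
  have h1 : s ^ ((2:ℝ) - n) = B := Real.rpow_inv_rpow hBpos.le hne2n
  have h2 : s ^ ((2:ℝ) - n) ≤ r ^ ((2:ℝ) - n) :=
    Real.rpow_le_rpow_of_nonpos hrpos (min_le_right _ _) (by linarith)
  have h3 : M ≤ B := le_max_left _ _
  have h4 := hbound r hrmem
  rw [← h1] at h3
  linarith
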